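/- Let k, l be positive integers with k < l < (b−1)k. Then p(m) > 0 for all m ∈ ℤ, p(m) < p(m+1) for all m ≥ 1, and p(m) > p(m+1) for all m ≤ 0; that is, the sequence satisfies ⋯ > p(−1) > p(0) = l > p(1) = k < p(2) < ⋯. -/
import Mathlib


/-- `pSeq a b k l p` says that `p : ℤ → ℤ` is the (unique) sequence with `p 0 = l`,
`p 1 = k`, and `p (m+2) = b * p (m+1) - p m` for even `m`,
`p (m+2) = a * p (m+1) - p m` for odd `m`. -/
def pSeq (a b k l : ℤ) (p : ℤ → ℤ) : Prop :=
  p 0 = l ∧ p 1 = k ∧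
    ∀ m : ℤ, p (m + 2) = (if Even m then b else a) * p (m + 1) - p m

theorem p_valley_case_ii (a b k l : ℤ) (ha : 2 ≤ a) (hb : 2 ≤ b) (hab : 4 < a * b)
    (hk : 0 < k) (hkl : k < l) (hlb : l < (b - 1) * k)
    (p : ℤ → ℤ) (hp : pSeq a b k l p) :
    (∀ m : ℤ, 0 < p m) ∧ (∀ m : ℤ, 1 ≤ m → p m < p (m + 1)) ∧
      (∀ m : ℤ, m ≤ 0 → p (m + 1) < p m) := by
  obtain ⟨h0, h1, hrec⟩ := hp
  have hc : ∀ m : ℤ, 2 ≤ (if Even m then b else a) := by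
    intro m; split <;> omega
  have h2 : p 1 < p (1 + 1) := by
    have h := hrec 0
    norm_num at h
    rw [h0, h1] at h
    rw [show (1:ℤ) + 1 = 2 by ring, h, h1]
    nlinarith
  have fwd : ∀ m : ℤ, 1 ≤ m → 0 < p m ∧ p m < p (m + 1) := by
    refine Int.le_induction ⟨h1 ▸ hk, h2⟩ ?_
    intro m hm ih
    · obtain ⟨hpos, hlt⟩ := ih
      have hr := hrec m
      have hc' := hc m
      have hp1 : 0 < p (m + 1) := by linarith
      refine ⟨hp1, ?_⟩
      rw [show m + 1 + 1 = m + 2 by ring, hr]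
      nlinarith
  have bwd : ∀ m : ℤ, m ≤ 0 → 0 < p (m + 1) ∧ p (m + 1) < p m := by
    refine Int.le_induction_down ⟨by rw [zero_add, h1]; exact hk, by rw [zero_add, h0, h1]; exact hkl⟩ ?_
    intro m hm ih
    · obtain ⟨hpos, hlt⟩ := ih
      have hr := hrec (m - 1)
      rw [show m - 1 + 2 = m + 1 by ring, show m - 1 + 1 = m by ring] at hr
      have hc' := hc (m - 1)
      have hpm : 0 < p m := by linarith
      refine ⟨by rw [show m - 1 + 1 = m by ring]; exact hpm, ?_⟩
      rw [show m - 1 + 1 = m by ring]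
      nlinarith
  refine ⟨?_, fun m hm => (fwd m hm).2, fun m hm => (bwd m hm).2⟩
  intro m
  rcases le_or_gt m 0 with h | h
  · obtain ⟨h1', h2'⟩ := bwd m h
    linarith
  · exact (fwd m h).1
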